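/- Exponential escape from non-Nash points: let t ↦ Q(t) ∈ K be differentiable on [0,T] with Q'(t) = G(Q(t)) for all t ∈ [0,T], and suppose that for some player i, some pure strategy ℓ and some ε > 0 one has ū_i(q_i(t), Q_{-i}(t)) - ū_i(e_ℓ, Q_{-i}(t)) ≥ ε for all t ∈ [0,T]. Then q_{i,ℓ}(t) ≥ q_{i,ℓ}(0) · exp(p_i ε t) for all t ∈ [0,T]. -/

import Mathlib

open Finset

/-- A point of the standard simplex in `ℝ^M`. -/
def IsSimplex {M : ℕ} (q : Fin M → ℝ) : Prop :=
  (∀ ℓ, 0 ≤ q ℓ) ∧ ∑ ℓ, q ℓ = 1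

/-- A mixed profile: one mixed strategy per player. -/
def InK {n : ℕ} {m : Fin n → ℕ} (Q : ∀ i, Fin (m i) → ℝ) : Prop :=
  ∀ i, IsSimplex (Q i)

/-- The `ℓ`-th unit vector `e_ℓ`. -/
def unitVec {M : ℕ} (ℓ : Fin M) : Fin M → ℝ := fun k => if k = ℓ then 1 else 0

/-- The multilinear (mixed) extension of a function on pure profiles:
`ū(Q) = Σ_s (Π_j q_{j, s_j}) c(s)`. -/
noncomputable def mixedExt {n : ℕ} {m : Fin n → ℕ} (c : (∀ j, Fin (m j)) → ℝ)
    (Q : ∀ i, Fin (m i) → ℝ) : ℝ :=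
  ∑ s : ∀ j, Fin (m j), (∏ j, Q j (s j)) * c s

/-- Nash equilibrium: no player can decrease her expected cost by a unilateral
(mixed) deviation. -/
def IsNash {n : ℕ} {m : Fin n → ℕ} (c : ∀ _i : Fin n, (∀ j, Fin (m j)) → ℝ)
    (Q : ∀ i, Fin (m i) → ℝ) : Prop :=
  ∀ i, ∀ q' : Fin (m i) → ℝ, IsSimplex q' →
    mixedExt (c i) Q ≤ mixedExt (c i) (Function.update Q i q')

/-- The multipopulation replicator vector field:
`G_{i,ℓ}(Q) = -p_i q_{i,ℓ} (ū_i(e_ℓ, Q_{-i}) - ū_i(q_i, Q_{-i}))`. -/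
noncomputable def repl {n : ℕ} {m : Fin n → ℕ} (c : ∀ _i : Fin n, (∀ j, Fin (m j)) → ℝ)
    (p : Fin n → ℝ) (Q : ∀ i, Fin (m i) → ℝ) (i : Fin n) (ℓ : Fin (m i)) : ℝ :=
  -(p i) * Q i ℓ *
    (mixedExt (c i) (Function.update Q i (unitVec ℓ)) - mixedExt (c i) Q)

/-- exponential escape from non-Nash points: along a solution of
the replicator dynamics on `[0,T]`, if strategy `ℓ` outperforms `q_i` by at
least `ε`, then `q_{i,ℓ}(t) ≥ q_{i,ℓ}(0) · exp(p_i ε t)`. -/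
theorem exponential_escape {n : ℕ} {m : Fin n → ℕ}
    (c : ∀ _i : Fin n, (∀ j, Fin (m j)) → ℝ)
    (p : Fin n → ℝ) (hp : ∀ i, 0 < p i)
    (T : ℝ) (hT : 0 ≤ T)
    (Q : ℝ → ∀ i, Fin (m i) → ℝ)
    (hKt : ∀ t ∈ Set.Icc (0:ℝ) T, InK (Q t))
    (hderiv : ∀ t ∈ Set.Icc (0:ℝ) T, ∀ (i : Fin n) (ℓ : Fin (m i)),
      HasDerivWithinAt (fun u => Q u i ℓ) (repl c p (Q t) i ℓ) (Set.Icc (0:ℝ) T) t)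
    (i : Fin n) (ℓ : Fin (m i)) (ε : ℝ) (hε : 0 < ε)
    (hgap : ∀ t ∈ Set.Icc (0:ℝ) T,
      ε ≤ mixedExt (c i) (Q t) - mixedExt (c i) (Function.update (Q t) i (unitVec ℓ))) :
    ∀ t ∈ Set.Icc (0:ℝ) T, Q 0 i ℓ * Real.exp (p i * ε * t) ≤ Q t i ℓ := by

  intro t ht
  have hpi := hp i
  set a := p i * ε with ha
  have hapos : 0 < a := mul_pos hpi hε
  set F : ℝ → ℝ := fun u => Q u i ℓ * Real.exp (-a * u) with hF
  have key : ∀ u ∈ Set.Icc (0:ℝ) T, HasDerivWithinAt F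
      ((repl c p (Q u) i ℓ - a * Q u i ℓ) * Real.exp (-a * u)) (Set.Icc (0:ℝ) T) u := by
    intro u hu
    have h1 := hderiv u hu i ℓ
    have h2 : HasDerivWithinAt (fun v => Real.exp (-a * v)) (Real.exp (-a * u) * (-a))
        (Set.Icc (0:ℝ) T) u :=
      (((hasDerivAt_id u).const_mul (-a)).exp.hasDerivWithinAt).congr_deriv (by simp only [id_eq]; ring)
    have := h1.mul h2
    convert this using 1
    all_goals first | rfl | ring
  have hnn : ∀ u ∈ Set.Icc (0:ℝ) T,
      0 ≤ (repl c p (Q u) i ℓ - a * Q u i ℓ) * Real.exp (-a * u) := by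
    intro u hu
    have hq : 0 ≤ Q u i ℓ := (hKt u hu i).1 ℓ
    have hg := hgap u hu
    have hrepl : a * Q u i ℓ ≤ repl c p (Q u) i ℓ := by
      rw [ha]
      unfold repl
      nlinarith [mul_nonneg hpi.le hq]
    exact mul_nonneg (by linarith) (Real.exp_pos _).le
  have hmono : MonotoneOn F (Set.Icc (0:ℝ) T) := by
    apply monotoneOn_of_hasDerivWithinAt_nonneg (convex_Icc 0 T)
      (fun u hu => (key u hu).continuousWithinAt)
      (f' := fun u => (repl c p (Q u) i ℓ - a * Q u i ℓ) * Real.exp (-a * u))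
    · intro u hu
      exact (key u (interior_subset hu)).mono interior_subset
    · intro u hu
      exact hnn u (interior_subset hu)
  have h0 : (0:ℝ) ∈ Set.Icc (0:ℝ) T := Set.left_mem_Icc.2 hT
  have hFle : F 0 ≤ F t := hmono h0 ht ht.1
  have hFt : F t = Q t i ℓ * Real.exp (-a * t) := rfl
  have hF0 : F 0 = Q 0 i ℓ := by simp [hF]
  rw [hF0, hFt] at hFle
  have := mul_le_mul_of_nonneg_right hFle (Real.exp_pos (a * t)).le
  calc Q 0 i ℓ * Real.exp (a * t) ≤ Q t i ℓ * Real.exp (-a * t) * Real.exp (a * t) := this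
    _ = Q t i ℓ := by rw [mul_assoc, ← Real.exp_add]; simp
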